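/- Suppose that for every choice of finite-dimensional complex Hilbert spaces H₁, H₂, H₁', H₂' and every PURE state π on (H₁⊗H₂) ⊗ (H₁'⊗H₂') one has E_m(π) ≥ E_m(tr_{H₁'⊗H₂'} π) + E_m(tr_{H₁⊗H₂} π) (with E_m computed across the 1–2 cuts). Then for every (not necessarily pure) state ρ on (H₁⊗H₂) ⊗ (H₁'⊗H₂'), E_m(ρ) ≥ E_m(tr_{H₁'⊗H₂'} ρ) + E_m(tr_{H₁⊗H₂} ρ). -/

import Mathlib

open Matrix Kronecker BigOperators ComplexOrder

noncomputable section

namespace QAdditivity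

/-- von Neumann entropy of a matrix (junk value `0` if not Hermitian):
`S(ρ) = -∑ᵢ λᵢ log λᵢ` over the eigenvalues of `ρ`. -/
def entropy {ι : Type} [Fintype ι] [DecidableEq ι] (ρ : Matrix ι ι ℂ) : ℝ :=
  if h : ρ.IsHermitian then ∑ i, Real.negMulLog (h.eigenvalues i) else 0

/-- A state: positive semidefinite with trace one. -/
def IsState {ι : Type} [Fintype ι] (ρ : Matrix ι ι ℂ) : Prop :=
  ρ.PosSemidef ∧ ρ.trace = 1

/-- A pure state: rank-one state, i.e. `|φ⟩⟨φ|` for a unit vector `φ`. -/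
def IsPureState {ι : Type} [Fintype ι] (ρ : Matrix ι ι ℂ) : Prop :=
  ∃ φ : ι → ℂ, star φ ⬝ᵥ φ = 1 ∧ ρ = vecMulVec φ (star φ)

/-- Partial trace over the second tensor factor. -/
def trRight {ι κ : Type} [Fintype ι] [Fintype κ]
    (ρ : Matrix (ι × κ) (ι × κ) ℂ) : Matrix ι ι ℂ :=
  Matrix.of fun i j => ∑ k, ρ (i, k) (j, k)

/-- Partial trace over the first tensor factor. -/
def trLeft {ι κ : Type} [Fintype ι] [Fintype κ]
    (ρ : Matrix (ι × κ) (ι × κ) ℂ) : Matrix κ κ ℂ :=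
  Matrix.of fun k l => ∑ i, ρ (i, k) (i, l)

/-- Entanglement of a (pure) bipartite state: `E(π) = S(tr_{H₂} π)`. -/
def pureEnt {ι κ : Type} [Fintype ι] [Fintype κ] [DecidableEq ι]
    (π : Matrix (ι × κ) (ι × κ) ℂ) : ℝ :=
  entropy (trRight π)

/-- `E_m(ρ)`: minimum over finite pure-state ensembles for `ρ` of the minimal
entanglement appearing in the ensemble. -/
def Em {ι κ : Type} [Fintype ι] [Fintype κ] [DecidableEq ι]
    (ρ : Matrix (ι × κ) (ι × κ) ℂ) : ℝ :=
  sInf { e : ℝ | ∃ (n : ℕ) (p : Fin (n + 1) → ℝ)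
      (π : Fin (n + 1) → Matrix (ι × κ) (ι × κ) ℂ),
    (∀ i, 0 < p i) ∧ (∀ i, IsPureState (π i)) ∧
    (∑ i, (p i : ℂ) • π i) = ρ ∧
    e = Finset.univ.inf' Finset.univ_nonempty fun i => pureEnt (π i) }

/-- Entanglement of formation `E_f(ρ)`. -/
def Ef {ι κ : Type} [Fintype ι] [Fintype κ] [DecidableEq ι]
    (ρ : Matrix (ι × κ) (ι × κ) ℂ) : ℝ :=
  sInf { e : ℝ | ∃ (n : ℕ) (p : Fin (n + 1) → ℝ)
      (π : Fin (n + 1) → Matrix (ι × κ) (ι × κ) ℂ),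
    (∀ i, 0 < p i) ∧ (∀ i, IsPureState (π i)) ∧
    (∑ i, (p i : ℂ) • π i) = ρ ∧
    e = ∑ i, p i * pureEnt (π i) }

/-- Canonical reordering `(H₁⊗H₂)⊗(H₁'⊗H₂') ≃ (H₁⊗H₁')⊗(H₂⊗H₂')` on matrices. -/
def reorder {a b a' b' : Type}
    (M : Matrix ((a × b) × (a' × b')) ((a × b) × (a' × b')) ℂ) :
    Matrix ((a × a') × (b × b')) ((a × a') × (b × b')) ℂ :=
  Matrix.reindex (Equiv.prodProdProdComm a b a' b') (Equiv.prodProdProdComm a b a' b') M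

/-- Complete positivity of a superoperator. -/
def IsCompletelyPositive {κ η : Type} [Fintype κ] [Fintype η]
    (f : Matrix κ κ ℂ → Matrix η η ℂ) : Prop :=
  ∀ (n : ℕ) (M : Matrix (κ × Fin n) (κ × Fin n) ℂ), M.PosSemidef →
    Matrix.PosSemidef (Matrix.of fun p q : η × Fin n =>
      f (Matrix.of fun a b => M (a, p.2) (b, q.2)) p.1 q.1)

/-- A quantum channel: a completely positive trace preserving linear map. -/
def IsChannel {κ η : Type} [Fintype κ] [Fintype η]
    (f : Matrix κ κ ℂ → Matrix η η ℂ) : Prop :=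
  IsLinearMap ℂ f ∧ IsCompletelyPositive f ∧ ∀ M, (f M).trace = M.trace

/-- Minimum output entropy of a channel. -/
def Smin {κ η : Type} [Fintype κ] [Fintype η] [DecidableEq η]
    (f : Matrix κ κ ℂ → Matrix η η ℂ) : ℝ :=
  sInf { e : ℝ | ∃ ρ : Matrix κ κ ℂ, IsState ρ ∧ e = entropy (f ρ) }

/-- The tensor product `Λ ⊗ Λ'` of two superoperators (defined on all of
`B(K ⊗ K')` by linearity via matrix units). -/
def tensorChannel {κ η κ' η' : Type} [Fintype κ] [Fintype κ']
    [DecidableEq κ] [DecidableEq κ']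
    (f : Matrix κ κ ℂ → Matrix η η ℂ) (g : Matrix κ' κ' ℂ → Matrix η' η' ℂ) :
    Matrix (κ × κ') (κ × κ') ℂ → Matrix (η × η') (η × η') ℂ :=
  fun M => Matrix.of fun p q =>
    ∑ a, ∑ b, ∑ a', ∑ b', M (a, a') (b, b') *
      f (Matrix.single a b 1) p.1 q.1 *
      g (Matrix.single a' b' 1) p.2 q.2

/-- Support of an operator: its range. -/
def supp {ι : Type} [Fintype ι] (ρ : Matrix ι ι ℂ) : Submodule ℂ (ι → ℂ) :=
  LinearMap.range ρ.mulVecLin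
section Helpers

variable {ι κ : Type} [Fintype ι] [Fintype κ]

lemma IsPureState.isState {ρ : Matrix ι ι ℂ} (h : IsPureState ρ) : IsState ρ := by
  obtain ⟨φ, hφ, rfl⟩ := h
  refine ⟨?_, ?_⟩
  · rw [vecMulVec_eq Unit, ← conjTranspose_replicateCol]
    exact posSemidef_self_mul_conjTranspose _
  · rw [← hφ]
    simp [Matrix.trace, Matrix.diag, vecMulVec_apply, dotProduct, mul_comm]

lemma trRight_eq_sum_submatrix (ρ : Matrix (ι × κ) (ι × κ) ℂ) :
    trRight ρ = ∑ k, ρ.submatrix (fun i => (i, k)) (fun j => (j, k)) := by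
  ext i j
  simp [trRight, Matrix.sum_apply]

lemma IsState.trRight' {ρ : Matrix (ι × κ) (ι × κ) ℂ} (h : IsState ρ) :
    IsState (trRight ρ) := by
  constructor
  · rw [trRight_eq_sum_submatrix]
    refine Finset.sum_induction _ _ (fun x y hx hy => hx.add hy) Matrix.PosSemidef.zero ?_
    exact fun k _ => h.1.submatrix _
  · rw [← h.2]
    simp [Matrix.trace, Matrix.diag, trRight, Fintype.sum_prod_type]

lemma IsState.trLeft' {ρ : Matrix (ι × κ) (ι × κ) ℂ} (h : IsState ρ) :
    IsState (trLeft ρ) := by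
  have heq : trLeft ρ = trRight (ρ.submatrix Prod.swap Prod.swap) := by
    ext k l
    simp [trLeft, trRight]
  rw [heq]
  refine IsState.trRight' ⟨h.1.submatrix _, ?_⟩
  rw [← h.2]
  simp [Matrix.trace, Matrix.diag, Fintype.sum_prod_type]
  rw [Finset.sum_comm]

lemma sum_eigenvalues_eq_one {ρ : Matrix ι ι ℂ} [DecidableEq ι] (h : IsState ρ)
    (hH : ρ.IsHermitian) : ∑ i, hH.eigenvalues i = 1 := by
  have h1 : ((∑ i, hH.eigenvalues i : ℝ) : ℂ) = ρ.trace := by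
    push_cast
    conv_rhs => rw [hH.spectral_theorem, Unitary.conjStarAlgAut_apply]
    rw [Matrix.trace_mul_cycle, Matrix.mem_unitaryGroup_iff'.mp hH.eigenvectorUnitary.2,
      one_mul, Matrix.trace_diagonal]
    simp
  rw [h.2] at h1
  exact_mod_cast h1

lemma entropy_nonneg {ρ : Matrix ι ι ℂ} [DecidableEq ι] (h : IsState ρ) : 0 ≤ entropy ρ := by
  have hH := h.1.1
  rw [entropy, dif_pos hH]
  have hsum := sum_eigenvalues_eq_one h hH
  refine Finset.sum_nonneg fun i _ => Real.negMulLog_nonneg (h.1.eigenvalues_nonneg i) ?_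
  calc hH.eigenvalues i ≤ ∑ j, hH.eigenvalues j :=
        Finset.single_le_sum (fun j _ => h.1.eigenvalues_nonneg j) (Finset.mem_univ i)
    _ = 1 := hsum

lemma pureEnt_nonneg [DecidableEq ι] {π : Matrix (ι × κ) (ι × κ) ℂ}
    (h : IsPureState π) : 0 ≤ pureEnt π :=
  entropy_nonneg h.isState.trRight'

/-- The defining set of `Em`. -/
def EmSet {ι κ : Type} [Fintype ι] [Fintype κ] [DecidableEq ι]
    (ρ : Matrix (ι × κ) (ι × κ) ℂ) : Set ℝ :=
  { e : ℝ | ∃ (n : ℕ) (p : Fin (n + 1) → ℝ)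
      (π : Fin (n + 1) → Matrix (ι × κ) (ι × κ) ℂ),
    (∀ i, 0 < p i) ∧ (∀ i, IsPureState (π i)) ∧
    (∑ i, (p i : ℂ) • π i) = ρ ∧
    e = Finset.univ.inf' Finset.univ_nonempty fun i => pureEnt (π i) }

lemma Em_eq_sInf [DecidableEq ι] (ρ : Matrix (ι × κ) (ι × κ) ℂ) :
    Em ρ = sInf (EmSet ρ) := rfl

lemma EmSet_nonneg [DecidableEq ι] {ρ : Matrix (ι × κ) (ι × κ) ℂ} {e : ℝ}
    (he : e ∈ EmSet ρ) : 0 ≤ e := by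
  obtain ⟨n, p, π, hp, hπ, hsum, rfl⟩ := he
  exact Finset.le_inf' _ _ fun i _ => pureEnt_nonneg (hπ i)

lemma bddBelow_EmSet [DecidableEq ι] (ρ : Matrix (ι × κ) (ι × κ) ℂ) :
    BddBelow (EmSet ρ) := ⟨0, fun e he => EmSet_nonneg he⟩

lemma mem_EmSet_of [DecidableEq ι] {ρ : Matrix (ι × κ) (ι × κ) ℂ}
    {γ : Type} [Fintype γ] [Nonempty γ]
    (p : γ → ℝ) (π : γ → Matrix (ι × κ) (ι × κ) ℂ)
    (hp : ∀ i, 0 < p i) (hπ : ∀ i, IsPureState (π i))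
    (hsum : ∑ i, (p i : ℂ) • π i = ρ) :
    (Finset.univ.inf' Finset.univ_nonempty fun i => pureEnt (π i)) ∈ EmSet ρ := by
  obtain ⟨n, hn⟩ : ∃ n, Fintype.card γ = n + 1 :=
    ⟨Fintype.card γ - 1, (Nat.succ_pred_eq_of_pos Fintype.card_pos).symm⟩
  let e : γ ≃ Fin (n + 1) := (Fintype.equivFin γ).trans (finCongr hn)
  refine ⟨n, p ∘ e.symm, π ∘ e.symm, fun i => hp _, fun i => hπ _, ?_, ?_⟩
  · rw [← hsum]
    exact Equiv.sum_comp e.symm (fun i => (p i : ℂ) • π i)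
  · refine le_antisymm ?_ ?_
    · refine Finset.le_inf' _ _ fun j _ => ?_
      exact Finset.inf'_le (fun i => pureEnt (π i)) (Finset.mem_univ (e.symm j))
    · refine Finset.le_inf' _ _ fun i _ => ?_
      have h := Finset.inf'_le (fun j : Fin (n + 1) => pureEnt ((π ∘ e.symm) j))
        (Finset.mem_univ (e i))
      simpa only [Function.comp_apply, Equiv.symm_apply_apply] using h

lemma exists_pure_decomposition {ρ : Matrix ι ι ℂ} [DecidableEq ι] (h : IsState ρ) :
    ∃ (γ : Type) (_ : Fintype γ) (_ : Nonempty γ) (p : γ → ℝ) (π : γ → Matrix ι ι ℂ),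
      (∀ i, 0 < p i) ∧ (∀ i, IsPureState (π i)) ∧ ∑ i, (p i : ℂ) • π i = ρ := by
  classical
  have hH : ρ.IsHermitian := h.1.1
  set lam := hH.eigenvalues with hlam
  set U : Matrix ι ι ℂ := (hH.eigenvectorUnitary : Matrix ι ι ℂ) with hU
  have hcol : ∀ k, star (fun i => U i k) ⬝ᵥ (fun i => U i k) = 1 := by
    intro k
    have h1 : star U * U = 1 := Matrix.mem_unitaryGroup_iff'.mp hH.eigenvectorUnitary.2
    have h2 := congrFun (congrFun (congrArg (fun M => (M : Matrix ι ι ℂ)) h1) k) k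
    simpa [Matrix.mul_apply, dotProduct, Matrix.one_apply] using h2
  have hρ : ρ = ∑ k, (lam k : ℂ) • vecMulVec (fun i => U i k) (star fun i => U i k) := by
    ext i j
    conv_lhs => rw [hH.spectral_theorem, Unitary.conjStarAlgAut_apply]
    simp only [Matrix.mul_apply, Matrix.sum_apply, Matrix.smul_apply,
      vecMulVec_apply, Pi.star_apply, smul_eq_mul, Matrix.star_apply,
      Matrix.diagonal_apply, Function.comp_apply, mul_ite, mul_zero, ite_mul, zero_mul,
      Finset.sum_ite_eq', Finset.mem_univ, if_true, RCLike.star_def]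
    refine Finset.sum_congr rfl fun k _ => ?_
    simp only [Complex.coe_algebraMap, RCLike.ofReal_alg, Complex.real_smul, mul_one]
    ring
  have hnn : ∀ k, 0 ≤ lam k := fun k => h.1.eigenvalues_nonneg k
  have hsum1 : ∑ k, lam k = 1 := sum_eigenvalues_eq_one h hH
  obtain ⟨k0, hk0⟩ : ∃ k, 0 < lam k := by
    by_contra hc
    push_neg at hc
    have : ∑ k, lam k ≤ 0 := Finset.sum_nonpos fun k _ => hc k
    linarith
  set S : Finset ι := Finset.univ.filter (fun k => 0 < lam k) with hS
  have hmem : k0 ∈ S := Finset.mem_filter.mpr ⟨Finset.mem_univ _, hk0⟩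
  refine ⟨{x // x ∈ S}, inferInstance, ⟨⟨k0, hmem⟩⟩, fun x => lam x.1,
    fun x => vecMulVec (fun i => U i x.1) (star fun i => U i x.1),
    fun x => (Finset.mem_filter.mp x.2).2, fun x => ⟨_, hcol x.1, rfl⟩, ?_⟩
  rw [hρ]
  refine Eq.trans (Finset.sum_coe_sort S
    (fun k => (lam k : ℂ) • vecMulVec (fun i => U i k) (star fun i => U i k))) ?_
  refine Finset.sum_subset (Finset.subset_univ S) fun k _ hk => ?_
  have : lam k = 0 := le_antisymm (by simpa [hS, Finset.mem_filter] using hk) (hnn k)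
  simp [this]

lemma Em_le_of_mem [DecidableEq ι] {ρ : Matrix (ι × κ) (ι × κ) ℂ} {e : ℝ}
    (he : e ∈ EmSet ρ) : Em ρ ≤ e :=
  csInf_le (bddBelow_EmSet ρ) he

lemma EmSet_nonempty [DecidableEq ι] [DecidableEq κ] {ρ : Matrix (ι × κ) (ι × κ) ℂ}
    (h : IsState ρ) : (EmSet ρ).Nonempty := by
  obtain ⟨γ, _, _, p, π, hp, hπ, hsum⟩ := exists_pure_decomposition h
  exact ⟨_, mem_EmSet_of p π hp hπ hsum⟩

lemma Em_le_pureEnt [DecidableEq ι] {π : Matrix (ι × κ) (ι × κ) ℂ}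
    (h : IsPureState π) : Em π ≤ pureEnt π := by
  have hm := mem_EmSet_of (ρ := π) (γ := Fin 1) (fun _ => (1 : ℝ)) (fun _ => π)
    (fun _ => one_pos) (fun _ => h) (by simp)
  refine le_trans (Em_le_of_mem hm) ?_
  simp

lemma Em_le_mix [DecidableEq ι] [DecidableEq κ] {ρ : Matrix (ι × κ) (ι × κ) ℂ}
    {n : ℕ} {c : Fin (n + 1) → ℝ} {σ : Fin (n + 1) → Matrix (ι × κ) (ι × κ) ℂ}
    (hc : ∀ i, 0 < c i) (hσ : ∀ i, IsState (σ i))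
    (hsum : ∑ i, (c i : ℂ) • σ i = ρ) (i0 : Fin (n + 1)) {e : ℝ}
    (he : e ∈ EmSet (σ i0)) : Em ρ ≤ e := by
  classical
  have H : ∀ i, ∃ (m : ℕ) (q : Fin (m + 1) → ℝ)
      (τ : Fin (m + 1) → Matrix (ι × κ) (ι × κ) ℂ),
      (∀ j, 0 < q j) ∧ (∀ j, IsPureState (τ j)) ∧ (∑ j, (q j : ℂ) • τ j) = σ i ∧
      (i = i0 → (Finset.univ.inf' Finset.univ_nonempty fun j => pureEnt (τ j)) ≤ e) := by
    intro i
    by_cases hi : i = i0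
    · subst hi
      obtain ⟨m, q, τ, h1, h2, h3, h4⟩ := he
      exact ⟨m, q, τ, h1, h2, h3, fun _ => le_of_eq h4.symm⟩
    · obtain ⟨e', m, q, τ, h1, h2, h3, -⟩ := EmSet_nonempty (hσ i)
      exact ⟨m, q, τ, h1, h2, h3, fun hcon => absurd hcon hi⟩
  choose m q τ h1 h2 h3 h4 using H
  have hinst : Nonempty (Σ i : Fin (n + 1), Fin (m i + 1)) := ⟨⟨i0, 0⟩⟩
  have hsum' : ∑ x : Σ i : Fin (n + 1), Fin (m i + 1),
      ((c x.1 * q x.1 x.2 : ℝ) : ℂ) • τ x.1 x.2 = ρ := by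
    rw [← hsum, ← Finset.univ_sigma_univ, Finset.sum_sigma]
    refine Finset.sum_congr rfl fun i _ => ?_
    rw [← h3 i, Finset.smul_sum]
    refine Finset.sum_congr rfl fun j _ => ?_
    push_cast
    rw [smul_smul]
  have hmem := mem_EmSet_of (fun x : Σ i : Fin (n + 1), Fin (m i + 1) => c x.1 * q x.1 x.2)
    (fun x => τ x.1 x.2) (fun x => mul_pos (hc x.1) (h1 x.1 x.2)) (fun x => h2 x.1 x.2) hsum'
  refine le_trans (Em_le_of_mem hmem) (le_trans ?_ (h4 i0 rfl))
  obtain ⟨j, -, hj⟩ := Finset.exists_mem_eq_inf' Finset.univ_nonempty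
    (fun j => pureEnt (τ i0 j))
  rw [hj]
  exact Finset.inf'_le (fun x : Σ i : Fin (n + 1), Fin (m i + 1) => pureEnt (τ x.1 x.2))
    (Finset.mem_univ ⟨i0, j⟩)

lemma reindex_sum {α β γ : Type} (e : α ≃ β) (s : Finset γ) (c : γ → ℂ)
    (M : γ → Matrix α α ℂ) :
    Matrix.reindex e e (∑ i ∈ s, c i • M i) = ∑ i ∈ s, c i • Matrix.reindex e e (M i) := by
  ext x y
  simp [Matrix.sum_apply]

lemma trRight_sum {γ : Type} (s : Finset γ) (c : γ → ℂ)
    (M : γ → Matrix (ι × κ) (ι × κ) ℂ) :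
    trRight (∑ i ∈ s, c i • M i) = ∑ i ∈ s, c i • trRight (M i) := by
  ext x y
  simp only [trRight, Matrix.of_apply, Matrix.sum_apply, Matrix.smul_apply, smul_eq_mul,
    Finset.mul_sum]
  rw [Finset.sum_comm]

lemma trLeft_sum {γ : Type} (s : Finset γ) (c : γ → ℂ)
    (M : γ → Matrix (ι × κ) (ι × κ) ℂ) :
    trLeft (∑ i ∈ s, c i • M i) = ∑ i ∈ s, c i • trLeft (M i) := by
  ext x y
  simp only [trLeft, Matrix.of_apply, Matrix.sum_apply, Matrix.smul_apply, smul_eq_mul,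
    Finset.mul_sum]
  rw [Finset.sum_comm]

lemma IsPureState.reindex {α β : Type} [Fintype α] [Fintype β] {M : Matrix α α ℂ}
    (h : IsPureState M) (e : α ≃ β) : IsPureState (Matrix.reindex e e M) := by
  obtain ⟨φ, hφ, rfl⟩ := h
  refine ⟨φ ∘ e.symm, ?_, ?_⟩
  · rw [← hφ]
    exact Equiv.sum_comp e.symm (fun i => star (φ i) * φ i)
  · ext x y
    simp [vecMulVec_apply]

lemma IsState.reindex {α β : Type} [Fintype α] [Fintype β] {M : Matrix α α ℂ}
    (h : IsState M) (e : α ≃ β) : IsState (Matrix.reindex e e M) := by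
  refine ⟨by simpa using h.1.submatrix ⇑e.symm, ?_⟩
  rw [← h.2]
  simp only [Matrix.trace, Matrix.diag, Matrix.reindex_apply, Matrix.submatrix_apply]
  exact Equiv.sum_comp e.symm fun i => M i i

end Helpers
/-- (i) ⟹ (ii): strong superadditivity of `E_m` for all pure states (over all
choices of the four spaces) implies it for all states. -/
theorem Em_strong_superadditive_pure_implies_all
    (hpure : ∀ (a b a' b' : Type) [Fintype a] [Fintype b] [Fintype a'] [Fintype b']
      [DecidableEq a] [DecidableEq b] [DecidableEq a'] [DecidableEq b'],
      ∀ π : Matrix ((a × b) × (a' × b')) ((a × b) × (a' × b')) ℂ,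
        IsPureState π →
        Em (reorder π) ≥ Em (trRight π) + Em (trLeft π))
    {a b a' b' : Type} [Fintype a] [Fintype b] [Fintype a'] [Fintype b']
    [DecidableEq a] [DecidableEq b] [DecidableEq a'] [DecidableEq b']
    (ρ : Matrix ((a × b) × (a' × b')) ((a × b) × (a' × b')) ℂ)
    (hρ : IsState ρ) :
    Em (reorder ρ) ≥ Em (trRight ρ) + Em (trLeft ρ) := by
  classical
  rw [ge_iff_le]
  set E := Equiv.prodProdProdComm a b a' b' with hE
  have hres : IsState (reorder ρ) := hρ.reindex E
  rw [Em_eq_sInf (reorder ρ)]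
  refine le_csInf (EmSet_nonempty hres) ?_
  rintro v ⟨n, p, π', hp, hπ, hsum, rfl⟩
  set σ : Fin (n + 1) → Matrix ((a × b) × (a' × b')) ((a × b) × (a' × b')) ℂ :=
    fun i => Matrix.reindex E.symm E.symm (π' i) with hσdef
  have hreorder : ∀ i, reorder (σ i) = π' i := by
    intro i
    ext x y
    simp [reorder, hσdef, hE, Equiv.prodProdProdComm]
  have hσpure : ∀ i, IsPureState (σ i) := fun i => (hπ i).reindex E.symm
  have hρsum : ∑ i, (p i : ℂ) • σ i = ρ := by
    have h0 := congrArg (Matrix.reindex E.symm E.symm) hsum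
    rw [reindex_sum] at h0
    rw [hσdef, h0]
    ext x y
    simp [reorder, hE, Equiv.prodProdProdComm]
  obtain ⟨i0, -, hmin⟩ := Finset.exists_mem_eq_inf' Finset.univ_nonempty
    (fun i => pureEnt (π' i))
  rw [hmin]
  have h2 := hpure a b a' b' (σ i0) (hσpure i0)
  have h1 : Em (reorder (σ i0)) ≤ pureEnt (π' i0) := by
    rw [hreorder i0]
    exact Em_le_pureEnt (hπ i0)
  have h3 : Em (trRight ρ) ≤ Em (trRight (σ i0)) := by
    rw [Em_eq_sInf (trRight (σ i0))]
    refine le_csInf (EmSet_nonempty (hσpure i0).isState.trRight') ?_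
    intro e' he'
    refine Em_le_mix hp (fun i => (hσpure i).isState.trRight') ?_ i0 he'
    rw [← trRight_sum, hρsum]
  have h4 : Em (trLeft ρ) ≤ Em (trLeft (σ i0)) := by
    rw [Em_eq_sInf (trLeft (σ i0))]
    refine le_csInf (EmSet_nonempty (hσpure i0).isState.trLeft') ?_
    intro e' he'
    refine Em_le_mix hp (fun i => (hσpure i).isState.trLeft') ?_ i0 he'
    rw [← trLeft_sum, hρsum]
  linarith

end QAdditivity
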